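/- Under the Scheme Hypotheses, assume additionally that all the maps T_1, …, T_m and I_1, …, I_m are continuous and that liminf_{n→∞} d(x_n, F) = 0, where d(x, F) = inf_{p∈F} ‖x − p‖. Then the explicit iterative sequence {x_n} is a Cauchy sequence in X. -/

import Mathlib

open Filter

lemma aux_prod_exp (σ : ℕ → ℝ) (hσ0 : ∀ n, 0 ≤ σ n) (hσsum : Summable σ) (s : Finset ℕ) :
    ∏ j ∈ s, (1 + σ j) ≤ Real.exp (∑' n, σ n) := by
  calc ∏ j ∈ s, (1 + σ j) ≤ ∏ j ∈ s, Real.exp (σ j) :=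
        Finset.prod_le_prod (fun j _ => by linarith [hσ0 j])
          (fun j _ => by have := Real.add_one_le_exp (σ j); linarith)
    _ = Real.exp (∑ j ∈ s, σ j) := (Real.exp_sum s σ).symm
    _ ≤ _ := Real.exp_le_exp.mpr (Summable.sum_le_tsum s (fun i _ => hσ0 i) hσsum)

lemma aux_recseq (d σ γ : ℕ → ℝ) (hσ0 : ∀ n, 0 ≤ σ n) (hγ0 : ∀ n, 0 ≤ γ n)
    (hrec : ∀ n, d (n + 1) ≤ (1 + σ n) * d n + γ n) :
    ∀ n k, d (n + k) ≤ (∏ j ∈ Finset.Ico n (n + k), (1 + σ j)) *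
      (d n + ∑ j ∈ Finset.Ico n (n + k), γ j) := by
  intro n k
  induction k with
  | zero => simp
  | succ k ih =>
      have hnk : n ≤ n + k := Nat.le_add_right n k
      have hP1 : (1:ℝ) ≤ ∏ j ∈ Finset.Ico n (n + k), (1 + σ j) := by
        calc (1:ℝ) = ∏ _j ∈ Finset.Ico n (n + k), (1:ℝ) := by simp
          _ ≤ _ := Finset.prod_le_prod (by intros; norm_num)
              (fun j _ => by linarith [hσ0 j])
      have h1 := hrec (n + k)
      rw [show n + (k+1) = (n + k) + 1 from rfl,
        Finset.prod_Ico_succ_top hnk, Finset.sum_Ico_succ_top hnk]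
      have hs0 : (0:ℝ) ≤ 1 + σ (n + k) := by linarith [hσ0 (n + k)]
      have hD := mul_le_mul_of_nonneg_left ih hs0
      have hPs : (1:ℝ) ≤ (∏ j ∈ Finset.Ico n (n + k), (1 + σ j)) * (1 + σ (n + k)) := by
        nlinarith [hP1, hσ0 (n + k)]
      have hg := le_mul_of_one_le_left (hγ0 (n + k)) hPs
      linarith [hD, hg, h1]

lemma aux_mem {X : Type*} [NormedAddCommGroup X] [NormedSpace ℝ X] {K : Set X}
    (hK : Convex ℝ K) {m : ℕ} (w : Fin (m + 1) → ℝ) (hw : ∀ j, 0 ≤ w j)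
    (hsum : ∑ j, w j = 1) (z : Fin (m + 1) → X) (hz : ∀ j, z j ∈ K) :
    w 0 • z 0 + ∑ i : Fin m, w i.succ • z i.succ ∈ K := by
  rw [← Fin.sum_univ_succ (fun j => w j • z j)]
  exact hK.sum_mem (fun j _ => hw j) hsum (fun j _ => hz j)

lemma aux_norm {X : Type*} [NormedAddCommGroup X] [NormedSpace ℝ X] {m : ℕ}
    (w : Fin (m + 1) → ℝ) (hw : ∀ j, 0 ≤ w j) (hsum : ∑ j, w j = 1)
    (z : Fin (m + 1) → X) (p : X) (c : ℝ) (hb : ∀ j, ‖z j - p‖ ≤ c) :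
    ‖(w 0 • z 0 + ∑ i : Fin m, w i.succ • z i.succ) - p‖ ≤ c := by
  rw [← Fin.sum_univ_succ (fun j => w j • z j)]
  have key : (∑ j, w j • z j) - p = ∑ j, w j • (z j - p) := by
    simp only [smul_sub, Finset.sum_sub_distrib, ← Finset.sum_smul, hsum, one_smul]
  rw [key]
  calc ‖∑ j, w j • (z j - p)‖ ≤ ∑ j, ‖w j • (z j - p)‖ := norm_sum_le _ _
    _ = ∑ j, w j * ‖z j - p‖ := by
        refine Finset.sum_congr rfl fun j _ => ?_
        rw [norm_smul, Real.norm_eq_abs, abs_of_nonneg (hw j)]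
    _ ≤ ∑ j : Fin (m+1), w j * c :=
        Finset.sum_le_sum fun j _ => mul_le_mul_of_nonneg_left (hb j) (hw j)
    _ = c := by rw [← Finset.sum_mul, hsum, one_mul]

set_option maxHeartbeats 1600000 in
theorem stmt6
    {X : Type*} [NormedAddCommGroup X] [NormedSpace ℝ X] [CompleteSpace X]
    [UniformConvexSpace X]
    {K : Set X} (hKne : K.Nonempty) (hKcl : IsClosed K) (hKco : Convex ℝ K)
    {m : ℕ} (hm : 1 ≤ m)
    (T I : Fin m → X → X)
    (hTK : ∀ i, Set.MapsTo (T i) K K) (hIK : ∀ i, Set.MapsTo (I i) K K)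
    (hTcont : ∀ i, ContinuousOn (T i) K) (hIcont : ∀ i, ContinuousOn (I i) K)
    (μ lam tμ tlam : Fin m → ℕ → ℝ)
    (hμ0 : ∀ i n, 0 ≤ μ i n) (hlam0 : ∀ i n, 0 ≤ lam i n)
    (htμ0 : ∀ i n, 0 ≤ tμ i n) (htlam0 : ∀ i n, 0 ≤ tlam i n)
    (hμlim : ∀ i, Tendsto (μ i) atTop (nhds 0)) (hlamlim : ∀ i, Tendsto (lam i) atTop (nhds 0))
    (htμlim : ∀ i, Tendsto (tμ i) atTop (nhds 0))
    (htlamlim : ∀ i, Tendsto (tlam i) atTop (nhds 0))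
    (hμsum : ∀ i, Summable (μ i)) (hlamsum : ∀ i, Summable (lam i))
    (htμsum : ∀ i, Summable (tμ i)) (htlamsum : ∀ i, Summable (tlam i))
    (φ ψ : Fin m → ℝ → ℝ)
    (hφmono : ∀ i, StrictMonoOn (φ i) (Set.Ici 0))
    (hφcont : ∀ i, ContinuousOn (φ i) (Set.Ici 0))
    (hφ0 : ∀ i, φ i 0 = 0) (hφpos : ∀ i t, 0 ≤ t → 0 ≤ φ i t)
    (hψmono : ∀ i, StrictMonoOn (ψ i) (Set.Ici 0))
    (hψcont : ∀ i, ContinuousOn (ψ i) (Set.Ici 0))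
    (hψ0 : ∀ i, ψ i 0 = 0) (hψpos : ∀ i t, 0 ≤ t → 0 ≤ ψ i t)
    (hI : ∀ i, ∀ n, 1 ≤ n → ∀ x ∈ K, ∀ y ∈ K,
      ‖(I i)^[n] x - (I i)^[n] y‖ ≤ ‖x - y‖ + tμ i n * ψ i ‖x - y‖ + tlam i n)
    (hT : ∀ i, ∀ n, 1 ≤ n → ∀ x ∈ K, ∀ y ∈ K,
      ‖(T i)^[n] x - (T i)^[n] y‖ ≤
        ‖(I i)^[n] x - (I i)^[n] y‖ + μ i n * φ i ‖(I i)^[n] x - (I i)^[n] y‖ + lam i n)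
    (F : Set X)
    (hFdef : ∀ p, p ∈ F ↔ p ∈ K ∧ ∀ i, T i p = p ∧ I i p = p)
    (hFne : F.Nonempty)
    (M Ms N Ns : Fin m → ℝ)
    (hM : ∀ i, 0 < M i) (hMs : ∀ i, 0 < Ms i) (hN : ∀ i, 0 < N i) (hNs : ∀ i, 0 < Ns i)
    (hφbound : ∀ i ξ, M i ≤ ξ → φ i ξ ≤ Ms i * ξ)
    (hψbound : ∀ i ζ, N i ≤ ζ → ψ i ζ ≤ Ns i * ζ)
    (a b : Fin (m + 1) → ℕ → ℝ)
    (ha : ∀ j n, a j n ∈ Set.Ioo (0 : ℝ) 1) (hb : ∀ j n, b j n ∈ Set.Ioo (0 : ℝ) 1)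
    (hasum : ∀ n, ∑ j, a j n = 1) (hbsum : ∀ n, ∑ j, b j n = 1)
    (x y : ℕ → X) (hx0 : x 0 ∈ K)
    (hy : ∀ n, y n = b 0 n • x n + ∑ i : Fin m, b i.succ n • (I i)^[n] (x n))
    (hxrec : ∀ n, x (n + 1) = a 0 n • x n + ∑ i : Fin m, a i.succ n • (T i)^[n] (y n))
    (hliminf : Filter.liminf (fun n => Metric.infDist (x n) F) atTop = 0)
    : CauchySeq x := by
  -- iterates map K to K
  have hIKn : ∀ i n, Set.MapsTo ((I i)^[n]) K K := fun i n => (hIK i).iterate n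
  have hTKn : ∀ i n, Set.MapsTo ((T i)^[n]) K K := fun i n => (hTK i).iterate n
  -- membership of the sequences in K
  have hyKof : ∀ n, x n ∈ K → y n ∈ K := by
    intro n hxn
    rw [hy n]
    have := aux_mem hKco (fun j => b j n) (fun j => (hb j n).1.le) (hbsum n)
      (Fin.cases (x n) fun i => (I i)^[n] (x n)) (by
        intro j
        induction j using Fin.cases with
        | zero => simpa using hxn
        | succ i => simpa using hIKn i n hxn)
    simpa using this
  have hxK : ∀ n, x n ∈ K := by
    intro n
    induction n with
    | zero => exact hx0
    | succ n ih =>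
        have hyn := hyKof n ih
        rw [hxrec n]
        have := aux_mem hKco (fun j => a j n) (fun j => (ha j n).1.le) (hasum n)
          (Fin.cases (x n) fun i => (T i)^[n] (y n)) (by
            intro j
            induction j using Fin.cases with
            | zero => simpa using ih
            | succ i => simpa using hTKn i n hyn)
        simpa using this
  have hyK : ∀ n, y n ∈ K := fun n => hyKof n (hxK n)
  -- extended (all n) versions of hI, hT
  have hI' : ∀ i n, ∀ z ∈ K, ∀ w ∈ K,
      ‖(I i)^[n] z - (I i)^[n] w‖ ≤ ‖z - w‖ + tμ i n * ψ i ‖z - w‖ + tlam i n := by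
    intro i n z hz w hw
    rcases Nat.eq_zero_or_pos n with h | h
    · subst h
      simp only [Function.iterate_zero, id_eq]
      have h1 := mul_nonneg (htμ0 i 0) (hψpos i _ (norm_nonneg (z - w)))
      have h2 := htlam0 i 0
      linarith
    · exact hI i n h z hz w hw
  have hT' : ∀ i n, ∀ z ∈ K, ∀ w ∈ K,
      ‖(T i)^[n] z - (T i)^[n] w‖ ≤
        ‖(I i)^[n] z - (I i)^[n] w‖ + μ i n * φ i ‖(I i)^[n] z - (I i)^[n] w‖ + lam i n := by
    intro i n z hz w hw
    rcases Nat.eq_zero_or_pos n with h | h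
    · subst h
      simp only [Function.iterate_zero, id_eq]
      have h1 := mul_nonneg (hμ0 i 0) (hφpos i _ (norm_nonneg (z - w)))
      have h2 := hlam0 i 0
      linarith
    · exact hT i n h z hz w hw
  -- affine bounds for the gauges
  set Aψ : Fin m → ℝ := fun i => ψ i (N i) with hAψdef
  set Aφ : Fin m → ℝ := fun i => φ i (M i) with hAφdef
  have hAψ0 : ∀ i, 0 ≤ Aψ i := fun i => hψpos i _ (hN i).le
  have hAφ0 : ∀ i, 0 ≤ Aφ i := fun i => hφpos i _ (hM i).le
  have hψb : ∀ i t, 0 ≤ t → ψ i t ≤ Aψ i + Ns i * t := by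
    intro i t ht
    rcases le_or_gt t (N i) with h | h
    · have h1 : ψ i t ≤ ψ i (N i) :=
        (hψmono i).monotoneOn ht (hN i).le h
      have h2 : 0 ≤ Ns i * t := mul_nonneg (hNs i).le ht
      simp only [hAψdef]; linarith
    · have h1 := hψbound i t h.le
      have h2 := hAψ0 i
      linarith
  have hφb : ∀ i t, 0 ≤ t → φ i t ≤ Aφ i + Ms i * t := by
    intro i t ht
    rcases le_or_gt t (M i) with h | h
    · have h1 : φ i t ≤ φ i (M i) :=
        (hφmono i).monotoneOn ht (hM i).le h
      have h2 : 0 ≤ Ms i * t := mul_nonneg (hMs i).le ht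
      simp only [hAφdef]; linarith
    · have h1 := hφbound i t h.le
      have h2 := hAφ0 i
      linarith
  -- the summable error sequences
  set s1 : ℕ → ℝ := fun n => ∑ i, tμ i n * Ns i with hs1def
  set t1 : ℕ → ℝ := fun n => ∑ i, (tμ i n * Aψ i + tlam i n) with ht1def
  set s2 : ℕ → ℝ := fun n => ∑ i, μ i n * Ms i with hs2def
  set t2 : ℕ → ℝ := fun n => ∑ i, (μ i n * Aφ i + lam i n) with ht2def
  have hs10 : ∀ n, 0 ≤ s1 n := fun n =>
    Finset.sum_nonneg fun i _ => mul_nonneg (htμ0 i n) (hNs i).le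
  have hs20 : ∀ n, 0 ≤ s2 n := fun n =>
    Finset.sum_nonneg fun i _ => mul_nonneg (hμ0 i n) (hMs i).le
  have ht10 : ∀ n, 0 ≤ t1 n := fun n =>
    Finset.sum_nonneg fun i _ =>
      add_nonneg (mul_nonneg (htμ0 i n) (hAψ0 i)) (htlam0 i n)
  have ht20 : ∀ n, 0 ≤ t2 n := fun n =>
    Finset.sum_nonneg fun i _ =>
      add_nonneg (mul_nonneg (hμ0 i n) (hAφ0 i)) (hlam0 i n)
  have hs1sum : Summable s1 := summable_sum fun i _ => (htμsum i).mul_right (Ns i)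
  have hs2sum : Summable s2 := summable_sum fun i _ => (hμsum i).mul_right (Ms i)
  have ht1sum : Summable t1 :=
    summable_sum fun i _ => ((htμsum i).mul_right (Aψ i)).add (htlamsum i)
  have ht2sum : Summable t2 :=
    summable_sum fun i _ => ((hμsum i).mul_right (Aφ i)).add (hlamsum i)
  set B1 : ℝ := ∑' n, s1 n with hB1def
  set B2 : ℝ := ∑' n, s2 n with hB2def
  have hB1 : ∀ n, s1 n ≤ B1 := fun n => hs1sum.le_tsum n fun j _ => hs10 j
  have hB2 : ∀ n, s2 n ≤ B2 := fun n => hs2sum.le_tsum n fun j _ => hs20 j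
  have hB10 : 0 ≤ B1 := le_trans (hs10 0) (hB1 0)
  have hB20 : 0 ≤ B2 := le_trans (hs20 0) (hB2 0)
  -- σ and γ
  set σ : ℕ → ℝ := fun n => (1 + s2 n) * (1 + s1 n) ^ 2 - 1 with hσdef
  set γ : ℕ → ℝ := fun n => (1 + s2 n) * (2 + s1 n) * t1 n + t2 n with hγdef
  have hσ0 : ∀ n, 0 ≤ σ n := by
    intro n; simp only [hσdef]
    nlinarith [hs10 n, hs20 n]
  have hγ0 : ∀ n, 0 ≤ γ n := by
    intro n; simp only [hγdef]
    have h1 : (0:ℝ) ≤ (1 + s2 n) * (2 + s1 n) * t1 n :=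
      mul_nonneg (mul_nonneg (by linarith [hs20 n]) (by linarith [hs10 n])) (ht10 n)
    linarith [ht20 n]
  have hσsum : Summable σ := by
    refine Summable.of_nonneg_of_le hσ0 (fun n => ?_)
      (((hs2sum.mul_left ((1 + B1) ^ 2)).add (hs1sum.mul_left (2 + B1))))
    simp only [hσdef]
    nlinarith [hs10 n, hs20 n, hB1 n, hB10,
      mul_nonneg (sub_nonneg.2 (hB1 n)) (hs10 n),
      mul_nonneg (sub_nonneg.2 (hB1 n)) (hs20 n),
      mul_nonneg (mul_nonneg (sub_nonneg.2 (hB1 n)) (add_nonneg hB10 (hs10 n))) (hs20 n)]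
  have hγsum : Summable γ := by
    refine Summable.of_nonneg_of_le hγ0 (fun n => ?_)
      (((ht1sum.mul_left ((1 + B2) * (2 + B1))).add ht2sum))
    simp only [hγdef]
    nlinarith [hs10 n, hs20 n, ht10 n, hB1 n, hB2 n, hB10, hB20,
      mul_nonneg (sub_nonneg.2 (hB1 n)) (ht10 n),
      mul_nonneg (sub_nonneg.2 (hB2 n)) (ht10 n),
      mul_nonneg (mul_nonneg hB20 (sub_nonneg.2 (hB1 n))) (ht10 n),
      mul_nonneg (mul_nonneg (hs10 n) (sub_nonneg.2 (hB2 n))) (ht10 n)]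
  -- the key one-step estimate
  have hstep : ∀ p ∈ F, ∀ n, ‖x (n + 1) - p‖ ≤ (1 + σ n) * ‖x n - p‖ + γ n := by
    intro p hp n
    obtain ⟨pK, hfix⟩ := (hFdef p).1 hp
    have hIp : ∀ i k, (I i)^[k] p = p := fun i k => Function.iterate_fixed (hfix i).2 k
    have hTp : ∀ i k, (T i)^[k] p = p := fun i k => Function.iterate_fixed (hfix i).1 k
    have hIstep : ∀ i (z : X), z ∈ K → ∀ c : ℝ, 0 ≤ c → ‖z - p‖ ≤ c →
        ‖(I i)^[n] z - p‖ ≤ (1 + s1 n) * c + t1 n := by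
      intro i z hz c hc hzc
      have h2 := hI' i n z hz p pK
      rw [hIp i n] at h2
      have h3 : ψ i ‖z - p‖ ≤ Aψ i + Ns i * c := by
        have ha1 := hψb i ‖z - p‖ (norm_nonneg _)
        have ha2 := mul_le_mul_of_nonneg_left hzc (hNs i).le
        linarith
      have h4 := mul_le_mul_of_nonneg_left h3 (htμ0 i n)
      have h5 : tμ i n * Ns i ≤ s1 n :=
        Finset.single_le_sum (f := fun j => tμ j n * Ns j)
          (fun j _ => mul_nonneg (htμ0 j n) (hNs j).le) (Finset.mem_univ i)
      have h6 : tμ i n * Aψ i + tlam i n ≤ t1 n :=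
        Finset.single_le_sum (f := fun j => tμ j n * Aψ j + tlam j n)
          (fun j _ => add_nonneg (mul_nonneg (htμ0 j n) (hAψ0 j)) (htlam0 j n))
          (Finset.mem_univ i)
      have h7 := mul_le_mul_of_nonneg_right h5 hc
      nlinarith [h2, h4, h6, h7, hzc]
    have hTstep : ∀ i (z : X), z ∈ K → ∀ c : ℝ, 0 ≤ c → ‖z - p‖ ≤ c →
        ‖(T i)^[n] z - p‖ ≤ (1 + s2 n) * ((1 + s1 n) * c + t1 n) + t2 n := by
      intro i z hz c hc hzc
      have hu := hIstep i z hz c hc hzc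
      have h2 := hT' i n z hz p pK
      rw [hIp i n, hTp i n] at h2
      have hu0 : (0:ℝ) ≤ ‖(I i)^[n] z - p‖ := norm_nonneg _
      have hf0 : (0:ℝ) ≤ (1 + s1 n) * c + t1 n := by
        have := mul_nonneg (by linarith [hs10 n] : (0:ℝ) ≤ 1 + s1 n) hc
        linarith [ht10 n]
      have h3 : φ i ‖(I i)^[n] z - p‖ ≤ Aφ i + Ms i * ((1 + s1 n) * c + t1 n) := by
        have ha1 := hφb i _ hu0
        have ha2 := mul_le_mul_of_nonneg_left hu (hMs i).le
        linarith
      have h4 := mul_le_mul_of_nonneg_left h3 (hμ0 i n)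
      have h5 : μ i n * Ms i ≤ s2 n :=
        Finset.single_le_sum (f := fun j => μ j n * Ms j)
          (fun j _ => mul_nonneg (hμ0 j n) (hMs j).le) (Finset.mem_univ i)
      have h6 : μ i n * Aφ i + lam i n ≤ t2 n :=
        Finset.single_le_sum (f := fun j => μ j n * Aφ j + lam j n)
          (fun j _ => add_nonneg (mul_nonneg (hμ0 j n) (hAφ0 j)) (hlam0 j n))
          (Finset.mem_univ i)
      have h7 := mul_le_mul_of_nonneg_right h5 hf0
      have h8 : μ i n * (Aφ i + Ms i * ((1 + s1 n) * c + t1 n)) =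
          μ i n * Aφ i + μ i n * Ms i * ((1 + s1 n) * c + t1 n) := by ring
      have h9 : (1 + s2 n) * ((1 + s1 n) * c + t1 n) + t2 n =
          ((1 + s1 n) * c + t1 n) + s2 n * ((1 + s1 n) * c + t1 n) + t2 n := by ring
      rw [h9]
      rw [h8] at h4
      linarith [h2, h4, h6, h7, hu]
    have hd0 : (0:ℝ) ≤ ‖x n - p‖ := norm_nonneg _
    have he0 : (0:ℝ) ≤ (1 + s1 n) * ‖x n - p‖ + t1 n := by
      have := mul_nonneg (by linarith [hs10 n] : (0:ℝ) ≤ 1 + s1 n) hd0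
      linarith [ht10 n]
    have hde : ‖x n - p‖ ≤ (1 + s1 n) * ‖x n - p‖ + t1 n := by
      nlinarith [hs10 n, ht10 n, hd0, mul_nonneg (hs10 n) hd0]
    -- bound on ‖y n - p‖
    have hyb : ‖y n - p‖ ≤ (1 + s1 n) * ‖x n - p‖ + t1 n := by
      rw [hy n]
      have := aux_norm (fun j => b j n) (fun j => (hb j n).1.le) (hbsum n)
        (Fin.cases (x n) fun i => (I i)^[n] (x n)) p
        ((1 + s1 n) * ‖x n - p‖ + t1 n) (by
          intro j
          induction j using Fin.cases with
          | zero => simpa using hde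
          | succ i => simpa using hIstep i (x n) (hxK n) ‖x n - p‖ hd0 le_rfl)
      simpa using this
    -- bound on ‖x (n+1) - p‖
    have hef : (1 + s1 n) * ‖x n - p‖ + t1 n ≤
        (1 + s1 n) * ((1 + s1 n) * ‖x n - p‖ + t1 n) + t1 n := by
      nlinarith [hs10 n, ht10 n, he0, mul_nonneg (hs10 n) he0]
    have hfG : (1 + s1 n) * ((1 + s1 n) * ‖x n - p‖ + t1 n) + t1 n ≤
        (1 + s2 n) * ((1 + s1 n) * ((1 + s1 n) * ‖x n - p‖ + t1 n) + t1 n) + t2 n := by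
      have hf0 : (0:ℝ) ≤ (1 + s1 n) * ((1 + s1 n) * ‖x n - p‖ + t1 n) + t1 n := by
        have := mul_nonneg (by linarith [hs10 n] : (0:ℝ) ≤ 1 + s1 n) he0
        linarith [ht10 n]
      nlinarith [hs20 n, ht20 n, hf0, mul_nonneg (hs20 n) hf0]
    have hxb : ‖x (n + 1) - p‖ ≤
        (1 + s2 n) * ((1 + s1 n) * ((1 + s1 n) * ‖x n - p‖ + t1 n) + t1 n) + t2 n := by
      rw [hxrec n]
      have := aux_norm (fun j => a j n) (fun j => (ha j n).1.le) (hasum n)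
        (Fin.cases (x n) fun i => (T i)^[n] (y n)) p
        ((1 + s2 n) * ((1 + s1 n) * ((1 + s1 n) * ‖x n - p‖ + t1 n) + t1 n) + t2 n) (by
          intro j
          induction j using Fin.cases with
          | zero => simpa using (hde.trans hef).trans hfG
          | succ i =>
              simpa using hTstep i (y n) (hyK n)
                ((1 + s1 n) * ‖x n - p‖ + t1 n) he0 hyb)
      simp only [Fin.cases_zero, Fin.cases_succ] at this
      exact this
    calc ‖x (n + 1) - p‖ ≤
        (1 + s2 n) * ((1 + s1 n) * ((1 + s1 n) * ‖x n - p‖ + t1 n) + t1 n) + t2 n := hxb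
      _ = (1 + σ n) * ‖x n - p‖ + γ n := by simp only [hσdef, hγdef]; ring
  -- iterated estimate
  have key : ∀ p ∈ F, ∀ n k,
      ‖x (n + k) - p‖ ≤ (∏ j ∈ Finset.Ico n (n + k), (1 + σ j)) *
        (‖x n - p‖ + ∑ j ∈ Finset.Ico n (n + k), γ j) := fun p hp =>
    aux_recseq (fun n => ‖x n - p‖) σ γ hσ0 hγ0 (hstep p hp)
  set E : ℝ := Real.exp (∑' n, σ n) with hEdef
  have hE1 : 1 ≤ E := by
    rw [hEdef]
    calc (1:ℝ) = Real.exp 0 := by simp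
      _ ≤ _ := Real.exp_le_exp.mpr (tsum_nonneg hσ0)
  have hE0 : (0:ℝ) < E := lt_of_lt_of_le one_pos hE1
  -- tail sums of γ
  have hRlim : Tendsto (fun n => ∑' j, γ (j + n)) atTop (nhds 0) := tendsto_sum_nat_add γ
  have hIcoR : ∀ n k, ∑ j ∈ Finset.Ico n (n + k), γ j ≤ ∑' j, γ (j + n) := by
    intro n k
    rw [Finset.sum_Ico_eq_sum_range]
    simp only [Nat.add_sub_cancel_left]
    calc ∑ j ∈ Finset.range k, γ (n + j) = ∑ j ∈ Finset.range k, γ (j + n) :=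
          Finset.sum_congr rfl fun j _ => by rw [Nat.add_comm]
      _ ≤ ∑' j, γ (j + n) :=
          Summable.sum_le_tsum _ (fun i _ => hγ0 _) ((summable_nat_add_iff n).mpr hγsum)
  -- conclude Cauchy
  rw [Metric.cauchySeq_iff']
  intro ε hε
  set ε' : ℝ := ε / (8 * E) with hε'def
  have hε' : 0 < ε' := by
    rw [hε'def]; positivity
  have hEε' : E * ε' = ε / 8 := by
    rw [hε'def]; field_simp
  have hε'8 : ε' ≤ ε / 8 := by
    calc ε' ≤ E * ε' := le_mul_of_one_le_left hε'.le hE1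
      _ = ε / 8 := hEε'
  obtain ⟨N0, hN0⟩ := eventually_atTop.mp (hRlim.eventually (gt_mem_nhds hε'))
  have hbdd : IsCoboundedUnder (· ≥ ·) atTop (fun n => Metric.infDist (x n) F) := by
    obtain ⟨p0, hp0⟩ := hFne
    refine IsBoundedUnder.isCoboundedUnder_ge
      (isBoundedUnder_of ⟨E * (‖x 0 - p0‖ + ∑' j, γ (j + 0)), fun k => ?_⟩)
    have h1 := key p0 hp0 0 k
    have h2 := hIcoR 0 k
    rw [Nat.zero_add] at h1 h2
    have hP := aux_prod_exp σ hσ0 hσsum (Finset.Ico 0 k)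
    have hS0 : 0 ≤ ∑ j ∈ Finset.Ico 0 k, γ j := Finset.sum_nonneg fun j _ => hγ0 j
    have hA0 : (0:ℝ) ≤ ‖x 0 - p0‖ + ∑ j ∈ Finset.Ico 0 k, γ j :=
      add_nonneg (norm_nonneg _) hS0
    calc Metric.infDist (x k) F ≤ dist (x k) p0 := Metric.infDist_le_dist_of_mem hp0
      _ = ‖x k - p0‖ := dist_eq_norm _ _
      _ ≤ (∏ j ∈ Finset.Ico 0 k, (1 + σ j)) * (‖x 0 - p0‖ + ∑ j ∈ Finset.Ico 0 k, γ j) := h1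
      _ ≤ E * (‖x 0 - p0‖ + ∑ j ∈ Finset.Ico 0 k, γ j) :=
          mul_le_mul_of_nonneg_right hP hA0
      _ ≤ E * (‖x 0 - p0‖ + ∑' j, γ (j + 0)) := by
          apply mul_le_mul_of_nonneg_left _ hE0.le
          linarith [h2]
  have hfreq : ∃ᶠ n in atTop, Metric.infDist (x n) F < ε' :=
    frequently_lt_of_liminf_lt hbdd (by rw [hliminf]; exact hε')
  obtain ⟨n, hnN0, hdn⟩ := frequently_atTop.mp hfreq N0
  obtain ⟨p, hpF, hdist⟩ := (Metric.infDist_lt_iff hFne).mp hdn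
  refine ⟨n, fun k hk => ?_⟩
  obtain ⟨l, rfl⟩ := Nat.exists_eq_add_of_le hk
  have h1 := key p hpF n l
  have hP := aux_prod_exp σ hσ0 hσsum (Finset.Ico n (n + l))
  have hxnp : ‖x n - p‖ < ε' := by rwa [dist_eq_norm] at hdist
  have hS : ∑ j ∈ Finset.Ico n (n + l), γ j < ε' :=
    lt_of_le_of_lt (hIcoR n l) (hN0 n hnN0)
  have hS0 : 0 ≤ ∑ j ∈ Finset.Ico n (n + l), γ j :=
    Finset.sum_nonneg fun j _ => hγ0 j
  have hP1 : (1:ℝ) ≤ ∏ j ∈ Finset.Ico n (n + l), (1 + σ j) := by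
    calc (1:ℝ) = ∏ _j ∈ Finset.Ico n (n + l), (1:ℝ) := by simp
      _ ≤ _ := Finset.prod_le_prod (by intros; norm_num) (fun j _ => by linarith [hσ0 j])
  have h2 : ‖x (n + l) - p‖ ≤ E * (ε' + ε') := by
    have hA0 : (0:ℝ) ≤ ‖x n - p‖ + ∑ j ∈ Finset.Ico n (n + l), γ j :=
      add_nonneg (norm_nonneg _) hS0
    calc ‖x (n + l) - p‖ ≤ _ := h1
      _ ≤ E * (‖x n - p‖ + ∑ j ∈ Finset.Ico n (n + l), γ j) :=
          mul_le_mul_of_nonneg_right hP hA0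
      _ ≤ E * (ε' + ε') := by
          apply mul_le_mul_of_nonneg_left _ hE0.le
          linarith [hxnp, hS]
  have h3 : dist (x (n + l)) (x n) ≤ ‖x (n + l) - p‖ + ‖x n - p‖ := by
    calc dist (x (n + l)) (x n) ≤ dist (x (n + l)) p + dist p (x n) :=
          dist_triangle _ _ _
      _ = ‖x (n + l) - p‖ + ‖x n - p‖ := by
          rw [dist_eq_norm, dist_comm, dist_eq_norm]
  have : E * (ε' + ε') = ε / 4 := by rw [mul_add, hEε']; ring
  linarith [h2, h3, hxnp, hε'8]
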